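/- Let X be a real Banach space, 1 < α ≤ 2, M ≥ 1, ω ≥ 0. Let T, B : [0,∞) → L(X) be strongly continuous with ‖T(t)‖ ≤ M·e^(ωt)·t^(α−1)/Γ(α), and let f : [0,∞) → X be continuous. Define w₀(t) = ∫₀ᵗ T(t−s) f(s) ds and w_n(t) = ∫₀ᵗ T(t−s) B(s) w_{n−1}(s) ds for n ≥ 1. Then for every n ∈ ℕ and t ≥ 0, setting K_t = sup_{0≤s≤t} ‖B(s)‖ and N_t = sup_{0≤s≤t} ‖f(s)‖, one has ‖w_n(t)‖ ≤ M^(n+1) · K_t^n · N_t · e^(ωt) · t^((n+1)α)/Γ((n+1)α + 1). -/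

import Mathlib

open MeasureTheory Set intervalIntegral

/-- Real Beta integral / convolution of power functions. -/
lemma conv_rpow {a b t : ℝ} (ha : 0 < a) (hb : 0 < b) (ht : 0 < t) :
    ∫ s in (0:ℝ)..t, s ^ (b - 1) * (t - s) ^ (a - 1) =
      Real.Gamma a * Real.Gamma b / Real.Gamma (a + b) * t ^ (a + b - 1) := by
  have hGab : 0 < Real.Gamma (a + b) := Real.Gamma_pos_of_pos (by linarith)
  have key := Complex.betaIntegral_scaled (b : ℂ) (a : ℂ) ht
  have hG := Complex.Gamma_mul_Gamma_eq_betaIntegral (s := (b:ℂ)) (t := (a:ℂ))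
    (by simpa using hb) (by simpa using ha)
  have hint : (∫ x in (0:ℝ)..t, (x:ℂ) ^ ((b:ℂ) - 1) * ((t:ℂ) - x) ^ ((a:ℂ) - 1))
      = ((∫ s in (0:ℝ)..t, s ^ (b - 1) * (t - s) ^ (a - 1) : ℝ) : ℂ) := by
    rw [← intervalIntegral.integral_ofReal, intervalIntegral.integral_of_le ht.le,
      intervalIntegral.integral_of_le ht.le]
    refine setIntegral_congr_fun measurableSet_Ioc fun x hx => ?_
    have hx0 : (0:ℝ) ≤ x := hx.1.le
    have htx : (0:ℝ) ≤ t - x := by linarith [hx.2]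
    push_cast
    rw [Complex.ofReal_cpow hx0, Complex.ofReal_cpow htx]
    push_cast
    ring
  have hbeta : Complex.betaIntegral (b:ℂ) (a:ℂ)
      = ((Real.Gamma a * Real.Gamma b / Real.Gamma (a + b) : ℝ) : ℂ) := by
    have hGab' : Complex.Gamma ((b:ℂ) + (a:ℂ)) ≠ 0 := by
      rw [show ((b:ℂ) + (a:ℂ)) = ((b + a : ℝ) : ℂ) by push_cast; ring, Complex.Gamma_ofReal]
      exact_mod_cast (Real.Gamma_pos_of_pos (by linarith)).ne'
    rw [show ((b:ℂ) + (a:ℂ)) = ((a + b : ℝ) : ℂ) by push_cast; ring,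
      Complex.Gamma_ofReal, Complex.Gamma_ofReal, Complex.Gamma_ofReal] at hG
    have hne : ((Real.Gamma (a + b) : ℝ) : ℂ) ≠ 0 := by exact_mod_cast hGab.ne'
    push_cast
    field_simp
    linear_combination -hG
  rw [hint, hbeta] at key
  have hpow : ((t:ℂ)) ^ ((b:ℂ) + (a:ℂ) - 1) = ((t ^ (a + b - 1) : ℝ) : ℂ) := by
    rw [show ((b:ℂ) + (a:ℂ) - 1) = ((a + b - 1 : ℝ) : ℂ) by push_cast; ring,
      ← Complex.ofReal_cpow ht.le]
  rw [hpow, ← Complex.ofReal_mul] at key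
  have key' : (∫ s in (0:ℝ)..t, s ^ (b - 1) * (t - s) ^ (a - 1))
      = t ^ (a + b - 1) * (Real.Gamma a * Real.Gamma b / Real.Gamma (a + b)) := by
    exact_mod_cast key
  rw [key']; ring

/-- Key estimation step: bound the convolution integral with `T`. -/
lemma conv_bound {X : Type*} [NormedAddCommGroup X] [NormedSpace ℝ X] [CompleteSpace X]
    (α M ω : ℝ) (hα1 : 1 < α) (hM : 1 ≤ M) (hω : 0 ≤ ω)
    (T : ℝ → X →L[ℝ] X)
    (hTbd : ∀ t : ℝ, 0 ≤ t → ‖T t‖ ≤ M * Real.exp (ω * t) * t ^ (α - 1) / Real.Gamma α)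
    (v : ℝ → X) (D β s : ℝ) (hβ : 1 ≤ β) (hs : 0 ≤ s) (hD : 0 ≤ D)
    (hv : ∀ u ∈ Icc (0:ℝ) s, ‖v u‖ ≤ D * Real.exp (ω * u) * u ^ (β - 1)) :
    ‖∫ u in (0:ℝ)..s, T (s - u) (v u)‖ ≤
      M * D * Real.exp (ω * s) * Real.Gamma β / Real.Gamma (α + β) * s ^ (α + β - 1) := by
  have hα0 : 0 < α := by linarith
  have hβ0 : 0 < β := by linarith
  have hGα : 0 < Real.Gamma α := Real.Gamma_pos_of_pos hα0
  have hGβ : 0 < Real.Gamma β := Real.Gamma_pos_of_pos hβ0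
  have hGαβ : 0 < Real.Gamma (α + β) := Real.Gamma_pos_of_pos (by linarith)
  rcases eq_or_lt_of_le hs with rfl | hs'
  · simp only [intervalIntegral.integral_same, norm_zero]
    rw [Real.zero_rpow (by linarith : α + β - 1 ≠ 0)]
    simp
  set C : ℝ := M * D * Real.exp (ω * s) / Real.Gamma α with hC
  have hC0 : 0 ≤ C := by positivity
  have hg_cont : Continuous fun u : ℝ => C * (u ^ (β - 1) * (s - u) ^ (α - 1)) := by
    have h1 : Continuous fun u : ℝ => u ^ (β - 1) :=
      Real.continuous_rpow_const (by linarith)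
    have h2 : Continuous fun u : ℝ => (s - u) ^ (α - 1) :=
      (Real.continuous_rpow_const (by linarith)).comp (by fun_prop)
    fun_prop
  have hbd := intervalIntegral.norm_integral_le_abs_of_norm_le
    (f := fun u => T (s - u) (v u)) (μ := volume) (a := 0) (b := s)
    (g := fun u => C * (u ^ (β - 1) * (s - u) ^ (α - 1))) ?_ (hg_cont.intervalIntegrable 0 s)
  · refine hbd.trans ?_
    rw [intervalIntegral.integral_const_mul, conv_rpow hα0 hβ0 hs']
    rw [abs_of_nonneg (by positivity)]
    refine le_of_eq ?_
    rw [hC]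
    field_simp
  · refine (ae_restrict_iff' measurableSet_uIoc).2 (Filter.Eventually.of_forall fun u hu => ?_)
    rw [Set.uIoc_of_le hs] at hu
    have hu0 : 0 ≤ u := hu.1.le
    have hus : u ≤ s := hu.2
    have hexp : Real.exp (ω * (s - u)) * Real.exp (ω * u) = Real.exp (ω * s) := by
      rw [← Real.exp_add]; ring_nf
    calc ‖T (s - u) (v u)‖ ≤ ‖T (s - u)‖ * ‖v u‖ := ContinuousLinearMap.le_opNorm _ _
      _ ≤ (M * Real.exp (ω * (s - u)) * (s - u) ^ (α - 1) / Real.Gamma α) *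
            (D * Real.exp (ω * u) * u ^ (β - 1)) :=
          mul_le_mul (hTbd _ (by linarith)) (hv u ⟨hu0, hus⟩) (norm_nonneg _)
            (div_nonneg (mul_nonneg (by positivity) (Real.rpow_nonneg (by linarith) _)) hGα.le)
      _ = C * (u ^ (β - 1) * (s - u) ^ (α - 1)) := by
          rw [hC, ← hexp]
          field_simp
theorem particular_solution_iterate_bound {X : Type*} [NormedAddCommGroup X]
    [NormedSpace ℝ X] [CompleteSpace X]
    (α M ω : ℝ) (hα1 : 1 < α) (hα2 : α ≤ 2) (hM : 1 ≤ M) (hω : 0 ≤ ω)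
    (T B : ℝ → X →L[ℝ] X) (f : ℝ → X) (w : ℕ → ℝ → X)
    (hTcont : ∀ x : X, ContinuousOn (fun t => T t x) (Set.Ici 0))
    (hBcont : ∀ x : X, ContinuousOn (fun t => B t x) (Set.Ici 0))
    (hTbd : ∀ t : ℝ, 0 ≤ t → ‖T t‖ ≤ M * Real.exp (ω * t) * t ^ (α - 1) / Real.Gamma α)
    (hf : ContinuousOn f (Set.Ici 0))
    (hw0 : ∀ t : ℝ, w 0 t = ∫ s in (0:ℝ)..t, T (t - s) (f s))
    (hrec : ∀ (n : ℕ) (t : ℝ),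
      w (n + 1) t = ∫ s in (0:ℝ)..t, T (t - s) (B s (w n s)))
    (n : ℕ) (t : ℝ) (ht : 0 ≤ t) :
    ‖w n t‖ ≤ M ^ (n + 1) * (sSup ((fun s => ‖B s‖) '' Set.Icc 0 t)) ^ n *
      (sSup ((fun s => ‖f s‖) '' Set.Icc 0 t)) * Real.exp (ω * t) *
      (t ^ (((n : ℝ) + 1) * α) / Real.Gamma (((n : ℝ) + 1) * α + 1)) := by
  set K := sSup ((fun s => ‖B s‖) '' Set.Icc 0 t) with hKdef
  set N := sSup ((fun s => ‖f s‖) '' Set.Icc 0 t) with hNdef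
  obtain ⟨CB, hCB⟩ : ∃ C, ∀ s : Icc (0:ℝ) t, ‖B s‖ ≤ C :=
    banach_steinhaus fun x => by
      obtain ⟨C, hC⟩ := (isCompact_Icc (a := (0:ℝ)) (b := t)).exists_bound_of_continuousOn
        ((hBcont x).mono Icc_subset_Ici_self)
      exact ⟨C, fun i => hC i i.2⟩
  have hBddB : BddAbove ((fun s => ‖B s‖) '' Icc 0 t) := by
    refine ⟨CB, ?_⟩
    rintro y ⟨s, hs, rfl⟩
    exact hCB ⟨s, hs⟩
  have hKle : ∀ s ∈ Icc (0:ℝ) t, ‖B s‖ ≤ K := fun s hs => le_csSup hBddB ⟨s, hs, rfl⟩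
  have hK0 : 0 ≤ K := le_trans (norm_nonneg _) (hKle 0 ⟨le_rfl, ht⟩)
  obtain ⟨Cf, hCf⟩ := (isCompact_Icc (a := (0:ℝ)) (b := t)).exists_bound_of_continuousOn
    (hf.mono Icc_subset_Ici_self)
  have hBddN : BddAbove ((fun s => ‖f s‖) '' Icc 0 t) := by
    refine ⟨Cf, ?_⟩
    rintro y ⟨s, hs, rfl⟩
    exact hCf s hs
  have hNle : ∀ s ∈ Icc (0:ℝ) t, ‖f s‖ ≤ N := fun s hs => le_csSup hBddN ⟨s, hs, rfl⟩
  have hN0 : 0 ≤ N := le_trans (norm_nonneg _) (hNle 0 ⟨le_rfl, ht⟩)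
  suffices H : ∀ m : ℕ, ∀ s ∈ Icc (0:ℝ) t, ‖w m s‖ ≤ M ^ (m + 1) * K ^ m * N *
      Real.exp (ω * s) * (s ^ (((m : ℝ) + 1) * α) / Real.Gamma (((m : ℝ) + 1) * α + 1)) from
    H n t ⟨ht, le_rfl⟩
  intro m
  induction m with
  | zero =>
    intro s hs
    rw [hw0]
    have hv : ∀ u ∈ Icc (0:ℝ) s, ‖f u‖ ≤ N * Real.exp (ω * u) * u ^ ((1:ℝ) - 1) := by
      intro u hu
      have h1 : ‖f u‖ ≤ N := hNle u ⟨hu.1, hu.2.trans hs.2⟩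
      have h2 : (1:ℝ) ≤ Real.exp (ω * u) := Real.one_le_exp (mul_nonneg hω hu.1)
      rw [sub_self, Real.rpow_zero, mul_one]
      exact h1.trans (le_mul_of_one_le_right hN0 h2)
    have h := conv_bound α M ω hα1 hM hω T hTbd f N 1 s le_rfl hs.1 hN0 hv
    refine h.trans (le_of_eq ?_)
    have hΓ : 0 < Real.Gamma (α + 1) := Real.Gamma_pos_of_pos (by linarith)
    rw [Real.Gamma_one]
    push_cast
    rw [show α + 1 - 1 = α by ring]
    field_simp
    ring_nf
  | succ m ih =>
    intro s hs
    rw [hrec]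
    have hΓm : 0 < Real.Gamma (((m : ℝ) + 1) * α + 1) :=
      Real.Gamma_pos_of_pos (by positivity)
    set D : ℝ := M ^ (m + 1) * K ^ (m + 1) * N / Real.Gamma (((m : ℝ) + 1) * α + 1) with hDdef
    have hD0 : 0 ≤ D := div_nonneg (by positivity) hΓm.le
    set β : ℝ := ((m : ℝ) + 1) * α + 1 with hβdef
    have hβ1 : 1 ≤ β := by
      have : 0 ≤ ((m : ℝ) + 1) * α := by positivity
      simp only [hβdef]; linarith
    have hv : ∀ u ∈ Icc (0:ℝ) s, ‖B u (w m u)‖ ≤ D * Real.exp (ω * u) * u ^ (β - 1) := by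
      intro u hu
      have hut : u ∈ Icc (0:ℝ) t := ⟨hu.1, hu.2.trans hs.2⟩
      calc ‖B u (w m u)‖ ≤ ‖B u‖ * ‖w m u‖ := ContinuousLinearMap.le_opNorm _ _
        _ ≤ K * (M ^ (m + 1) * K ^ m * N * Real.exp (ω * u) *
              (u ^ (((m : ℝ) + 1) * α) / Real.Gamma (((m : ℝ) + 1) * α + 1))) :=
            mul_le_mul (hKle u hut) (ih u hut) (norm_nonneg _) hK0
        _ = D * Real.exp (ω * u) * u ^ (β - 1) := by
            rw [hDdef, show β - 1 = ((m : ℝ) + 1) * α by rw [hβdef]; ring]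
            field_simp
            ring
    have h := conv_bound α M ω hα1 hM hω T hTbd (fun u => B u (w m u)) D β s hβ1 hs.1 hD0 hv
    refine h.trans (le_of_eq ?_)
    have hΓ2 : 0 < Real.Gamma (((m : ℝ) + 2) * α + 1) :=
      Real.Gamma_pos_of_pos (by positivity)
    rw [hDdef, hβdef]
    push_cast
    rw [show α + (((m : ℝ) + 1) * α + 1) - 1 = ((m : ℝ) + 2) * α by ring,
      show α + (((m : ℝ) + 1) * α + 1) = ((m : ℝ) + 2) * α + 1 by ring]
    field_simp
    ring
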